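/- Let ρ : (0,b) → ℝ be differentiable with ρ'(t) + ρ(t)² ≥ -κ for all t ∈ (0,b) and lim_{t→0⁺} ρ(t) = ∞. Then ct_κ(t) ≤ ρ(t) for all t ∈ (0, min{b, π_κ}). -/

import Mathlib

noncomputable def ct (κ t : ℝ) : ℝ :=
  if 0 < κ then Real.sqrt κ * (Real.cos (Real.sqrt κ * t) / Real.sin (Real.sqrt κ * t))
  else if κ = 0 then 1 / t
  else Real.sqrt (-κ) * (Real.cosh (Real.sqrt (-κ) * t) / Real.sinh (Real.sqrt (-κ) * t))

open Set

lemma ct_hasDerivAt (κ : ℝ) {s : ℝ} (hs : 0 < s) (hπ : 0 < κ → s < Real.pi / Real.sqrt κ) :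
    HasDerivAt (ct κ) (-κ - ct κ s ^ 2) s := by
  rcases lt_trichotomy 0 κ with hκ | hκ | hκ
  · set a := Real.sqrt κ with ha
    have ha0 : 0 < a := Real.sqrt_pos.mpr hκ
    have hasq : a ^ 2 = κ := Real.sq_sqrt hκ.le
    have hlt : a * s < Real.pi := by
      have := hπ hκ
      rw [lt_div_iff₀ ha0] at this
      linarith [this]
    have hsinpos : 0 < Real.sin (a * s) := Real.sin_pos_of_pos_of_lt_pi (by positivity) hlt
    have hsin : HasDerivAt (fun t => Real.sin (a * t)) (Real.cos (a * s) * (a * 1)) s :=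
      (Real.hasDerivAt_sin (a * s)).comp s ((hasDerivAt_id s).const_mul a)
    have hcos : HasDerivAt (fun t => Real.cos (a * t)) (-Real.sin (a * s) * (a * 1)) s :=
      (Real.hasDerivAt_cos (a * s)).comp s ((hasDerivAt_id s).const_mul a)
    have hdiv := (hcos.div hsin hsinpos.ne').const_mul a
    have hfun : ct κ = fun t => a * (Real.cos (a * t) / Real.sin (a * t)) := by
      funext t; simp [ct, if_pos hκ, ha]
    rw [hfun]
    refine hdiv.congr_deriv ?_
    have hpy := Real.sin_sq_add_cos_sq (a * s)
    field_simp
    nlinarith [hpy, hsinpos, sq_nonneg (Real.sin (a*s))]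
  · have hfun : ct κ = fun t => 1 / t := by
      funext t; simp [ct, ← hκ]
    rw [hfun]
    have := hasDerivAt_inv hs.ne'
    have hf : (fun t : ℝ => 1 / t) = fun y => y⁻¹ := by funext t; simp [one_div]
    rw [hf]
    refine this.congr_deriv ?_
    rw [← hκ]; simp [inv_pow]
  · have hfun : ct κ = fun t => Real.sqrt (-κ) * (Real.cosh (Real.sqrt (-κ) * t) / Real.sinh (Real.sqrt (-κ) * t)) := by
      funext t
      have h1 : ¬ (0 < κ) := by linarith
      have h2 : κ ≠ 0 := by linarith
      simp [ct, h1, h2]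
    rw [hfun]
    set a := Real.sqrt (-κ) with ha
    have ha0 : 0 < a := Real.sqrt_pos.mpr (by linarith)
    have hasq : a ^ 2 = -κ := Real.sq_sqrt (by linarith)
    have hsinh : 0 < Real.sinh (a * s) := by
      rw [Real.sinh_pos_iff]; positivity
    have hs1 : HasDerivAt (fun t => Real.sinh (a * t)) (Real.cosh (a * s) * (a * 1)) s :=
      (Real.hasDerivAt_sinh (a * s)).comp s ((hasDerivAt_id s).const_mul a)
    have hc1 : HasDerivAt (fun t => Real.cosh (a * t)) (Real.sinh (a * s) * (a * 1)) s :=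
      (Real.hasDerivAt_cosh (a * s)).comp s ((hasDerivAt_id s).const_mul a)
    have hdiv := (hc1.div hs1 hsinh.ne').const_mul a
    refine hdiv.congr_deriv ?_
    have hpy := Real.cosh_sq_sub_sinh_sq (a * s)
    field_simp
    nlinarith [hpy, hsinh]

lemma riccati_compare {κ a c : ℝ} (hac : a < c) (ρ ρ' ψ ψ' : ℝ → ℝ)
    (hρ : ∀ t ∈ Icc a c, HasDerivAt ρ (ρ' t) t)
    (hψ : ∀ t ∈ Icc a c, HasDerivAt ψ (ψ' t) t)
    (hρineq : ∀ t ∈ Icc a c, -κ ≤ ρ' t + ρ t ^ 2)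
    (hψeq : ∀ t ∈ Icc a c, ψ' t = -κ - ψ t ^ 2)
    (hstart : ψ a ≤ ρ a) : ψ c ≤ ρ c := by
  by_contra hcon
  push_neg at hcon
  set g : ℝ → ℝ := fun t => ρ t - ψ t with hg
  have hgd : ∀ t ∈ Icc a c, HasDerivAt g (ρ' t - ψ' t) t := fun t ht => (hρ t ht).sub (hψ t ht)
  have hgc : ContinuousOn g (Icc a c) := fun t ht =>
    ((hgd t ht).continuousAt).continuousWithinAt
  -- bound on ρ + ψ
  obtain ⟨K, hK⟩ : ∃ K, ∀ t ∈ Icc a c, |ρ t + ψ t| ≤ K := by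
    obtain ⟨K, hK⟩ := isCompact_Icc.exists_bound_of_continuousOn
      (f := fun t => ρ t + ψ t) (fun t ht => ((hρ t ht).continuousAt.add (hψ t ht).continuousAt).continuousWithinAt)
    exact ⟨K, fun t ht => hK t ht⟩
  -- first crossing from the right
  set S := {t ∈ Icc a c | 0 ≤ g t} with hS
  have hSsub : S ⊆ Icc a c := fun t ht => ht.1
  have hSne : S.Nonempty := ⟨a, ⟨le_refl a, hac.le⟩, by simpa [hg] using hstart⟩
  have hSclosed : IsClosed S := by
    have : S = Icc a c ∩ g ⁻¹' (Ici 0) := by ext t; simp [hS, and_comm]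
    rw [this]
    exact hgc.preimage_isClosed_of_isClosed isClosed_Icc isClosed_Ici
  have hScomp : IsCompact S := isCompact_Icc.of_isClosed_subset hSclosed hSsub
  set t2 := sSup S with ht2def
  have ht2 : t2 ∈ S := hScomp.sSup_mem hSne
  have ht2Icc : t2 ∈ Icc a c := ht2.1
  have ht2lt : t2 < c := by
    rcases lt_or_eq_of_le ht2Icc.2 with h | h
    · exact h
    · exfalso; have := ht2.2; rw [h] at this; simp [hg] at this; linarith
  have hneg : ∀ t ∈ Ioc t2 c, g t < 0 := by
    intro t ht
    by_contra hge
    push_neg at hge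
    have : t ∈ S := ⟨⟨ht2Icc.1.trans ht.1.le, ht.2⟩, hge⟩
    exact absurd (le_csSup hScomp.bddAbove this) (not_le.mpr ht.1)
  have hgt2 : g t2 = 0 := by
    refine le_antisymm ?_ ht2.2
    have hcont : ContinuousWithinAt g (Ioc t2 c) t2 :=
      ((hgd t2 ht2Icc).continuousAt).continuousWithinAt
    have hne : (nhdsWithin t2 (Ioc t2 c)).NeBot := by
      apply mem_closure_iff_nhdsWithin_neBot.mp
      rw [closure_Ioc ht2lt.ne]
      exact ⟨le_refl t2, ht2lt.le⟩
    haveI := hne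
    exact le_of_tendsto hcont (eventually_mem_nhdsWithin.mono fun x hx => (hneg x hx).le)
  have hgle : ∀ t ∈ Icc t2 c, g t ≤ 0 := by
    intro t ht
    rcases eq_or_lt_of_le ht.1 with h | h
    · rw [← h, hgt2]
    · exact (hneg t ⟨h, ht.2⟩).le
  -- integrating factor
  set h : ℝ → ℝ := fun t => Real.exp (-K * t) * g t with hh
  have hmono : MonotoneOn h (Icc t2 c) := by
    apply monotoneOn_of_deriv_nonneg (convex_Icc t2 c)
    · exact (Real.continuous_exp.comp (continuous_const.mul continuous_id)).continuousOn.mul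
        (hgc.mono (Icc_subset_Icc_left ht2Icc.1))
    · intro t ht
      rw [interior_Icc] at ht
      have htIcc : t ∈ Icc a c := ⟨ht2Icc.1.trans ht.1.le, ht.2.le⟩
      exact (((Real.hasDerivAt_exp (-K * t)).comp t ((hasDerivAt_id t).const_mul (-K))).mul
        (hgd t htIcc)).differentiableAt.differentiableWithinAt
    · intro t ht
      rw [interior_Icc] at ht
      have htIcc : t ∈ Icc a c := ⟨ht2Icc.1.trans ht.1.le, ht.2.le⟩
      have hd : HasDerivAt h (Real.exp (-K * t) * (-K * 1) * g t + Real.exp (-K * t) * (ρ' t - ψ' t)) t :=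
        (((Real.hasDerivAt_exp (-K * t)).comp t ((hasDerivAt_id t).const_mul (-K))).mul (hgd t htIcc))
      rw [hd.deriv]
      have h1 := hρineq t htIcc
      have h2 := hψeq t htIcc
      have h3 := hgle t ⟨ht.1.le, ht.2.le⟩
      have h4 := abs_le.mp (hK t htIcc)
      have h5 : (0:ℝ) < Real.exp (-K * t) := Real.exp_pos _
      simp only [hg] at h3
      have key : 0 ≤ -K * g t + (ρ' t - ψ' t) := by
        have hprod : 0 ≤ (K + (ρ t + ψ t)) * (-(ρ t - ψ t)) :=
          mul_nonneg (by linarith [h4.1]) (by linarith)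
        simp only [hg]
        nlinarith [hprod]
      nlinarith [mul_nonneg h5.le key]
  have := hmono ⟨le_refl t2, ht2lt.le⟩ ⟨ht2lt.le, le_refl c⟩ ht2lt.le
  simp only [hh, hgt2, mul_zero] at this
  have hgc0 : g c < 0 := by simp [hg]; linarith
  nlinarith [Real.exp_pos (-K * c), this, hgc0]

/-- Riccati comparison estimate, part 2: if `ρ' + ρ² ≥ -κ` on `(0,b)` and
`ρ(t) → ∞` as `t → 0⁺`, then `ct_κ ≤ ρ` on `(0, min {b, π_κ})`. -/
theorem riccati_comparison_estimate_lower
    (κ b : ℝ) (hb : 0 < b) (ρ ρ' : ℝ → ℝ)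
    (hρ : ∀ t ∈ Set.Ioo (0 : ℝ) b, HasDerivAt ρ (ρ' t) t)
    (hineq : ∀ t ∈ Set.Ioo (0 : ℝ) b, -κ ≤ ρ' t + (ρ t) ^ 2)
    (hlim : Filter.Tendsto ρ (nhdsWithin 0 (Set.Ioi 0)) Filter.atTop) :
    ∀ t, 0 < t → t < b → (0 < κ → t < Real.pi / Real.sqrt κ) → ct κ t ≤ ρ t := by
  intro T hT0 hTb hTπ
  -- choose ε0
  set ε0 : ℝ := if h : 0 < κ then (Real.pi / Real.sqrt κ - T) / 2 else 1 with hε0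
  have hε0pos : 0 < ε0 := by
    rw [hε0]
    split_ifs with h
    · have := hTπ h; linarith
    · norm_num
  have hε0π : 0 < κ → T + ε0 < Real.pi / Real.sqrt κ := by
    intro h
    rw [hε0]; simp only [dif_pos h]
    have := hTπ h; linarith
  -- key estimate for each small ε
  have key : ∀ ε ∈ Ioo (0:ℝ) ε0, ct κ (T + ε) ≤ ρ T := by
    intro ε hε
    set ψ : ℝ → ℝ := fun t => ct κ (t + ε) with hψdef
    have hψd : ∀ t ∈ Icc (0:ℝ) T, HasDerivAt ψ (-κ - ψ t ^ 2) t := by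
      intro t ht
      have h1 : 0 < t + ε := by have := ht.1; linarith [hε.1]
      have h2 : 0 < κ → t + ε < Real.pi / Real.sqrt κ := by
        intro h; have := hε0π h; have := ht.2; have := hε.2; linarith
      have := (ct_hasDerivAt κ h1 h2).comp t ((hasDerivAt_id t).add_const ε)
      simp at this; exact this
    -- ψ bounded near 0, ρ large near 0
    have hψ0 : ContinuousAt ψ 0 := (hψd 0 ⟨le_refl 0, hT0.le⟩).continuousAt
    have hev1 : ∀ᶠ t in nhdsWithin 0 (Set.Ioi 0), ψ t < ψ 0 + 1 := by
      apply Filter.Eventually.filter_mono nhdsWithin_le_nhds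
      exact hψ0.eventually_lt_const (by linarith)
    have hev2 : ∀ᶠ t in nhdsWithin 0 (Set.Ioi 0), ψ 0 + 1 ≤ ρ t :=
      hlim.eventually_ge_atTop _
    have hev3 : ∀ᶠ t in nhdsWithin 0 (Set.Ioi 0), t ∈ Ioo 0 T :=
      Filter.eventually_of_mem (Ioo_mem_nhdsGT_of_mem ⟨le_refl 0, hT0⟩) (fun x hx => hx)
    obtain ⟨t0, ⟨ht01, ht02⟩, ht03⟩ := ((hev1.and hev2).and hev3).exists
    -- apply comparison on [t0, T]
    have hsub : Icc t0 T ⊆ Ioo (0:ℝ) b := fun t ht =>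
      ⟨lt_of_lt_of_le ht03.1 ht.1, lt_of_le_of_lt ht.2 hTb⟩
    have hsub2 : Icc t0 T ⊆ Icc (0:ℝ) T := fun t ht => ⟨ht03.1.le.trans ht.1, ht.2⟩
    have := riccati_compare (κ := κ) ht03.2 ρ ρ' ψ (fun t => -κ - ψ t ^ 2)
      (fun t ht => hρ t (hsub ht)) (fun t ht => hψd t (hsub2 ht))
      (fun t ht => hineq t (hsub ht)) (fun t _ => rfl)
      (by linarith [ht01, ht02])
    simpa [hψdef] using this
  -- take ε → 0
  have hcontT : ContinuousAt (ct κ) T := (ct_hasDerivAt κ hT0 hTπ).continuousAt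
  have htend : Filter.Tendsto (fun ε => ct κ (T + ε)) (nhdsWithin 0 (Set.Ioi 0)) (nhds (ct κ T)) := by
    have h1 : Filter.Tendsto (fun ε : ℝ => T + ε) (nhdsWithin 0 (Set.Ioi 0)) (nhds T) := by
      have : Filter.Tendsto (fun ε : ℝ => T + ε) (nhds 0) (nhds (T + 0)) :=
        (continuous_const.add continuous_id).tendsto 0
      simpa using this.mono_left nhdsWithin_le_nhds
    exact hcontT.tendsto.comp h1
  have hev : ∀ᶠ ε in nhdsWithin 0 (Set.Ioi 0), ct κ (T + ε) ≤ ρ T := by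
    filter_upwards [Ioo_mem_nhdsGT_of_mem ⟨le_refl (0:ℝ), hε0pos⟩] with ε hε
    exact key ε hε
  exact le_of_tendsto htend hev
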